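/- Let α ∈ (0,1], B = ⌈log₂(2/α)⌉ and B' = ⌊log₂(2/α)⌋. Let B* be a random variable taking values in {B', B} with P(B* = B) = 2 − 2^{B−1}α. Fix θ₀ ∈ ℝ and Δ ∈ [0, 1/2]. Suppose that for each b ∈ {B', B} there are real-valued random variables θ̂^{(b,1)}, …, θ̂^{(b,b)} that are mutually independent, independent of B*, and each has median bias about θ₀ at most Δ. Then P( θ₀ ∉ [ min_{1≤j≤B*} θ̂^{(B*,j)}, max_{1≤j≤B*} θ̂^{(B*,j)} ] ) ≤ α (1 + 2 (B Δ)² e^{2 B Δ}). -/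

import Mathlib

open MeasureTheory ProbabilityTheory

/-- The median bias of a real-valued random variable `X` about a point `θ`:
`(1/2 − min(P(X ≤ θ), P(X ≥ θ)))₊`. -/
noncomputable def medBias {Ω : Type*} [MeasurableSpace Ω] (P : Measure Ω)
    (X : Ω → ℝ) (θ : ℝ) : ℝ :=
  max (1 / 2 - min (P {ω | X ω ≤ θ}).toReal (P {ω | θ ≤ X ω}).toReal) 0



lemma hulc_prod_aux {ι : Type*} [DecidableEq ι] (c : ℝ) (hc : 1/2 ≤ c) (hc1 : c ≤ 1)
    (s t : ι → ℝ) (hs0 : ∀ i, 0 ≤ s i) (ht0 : ∀ i, 0 ≤ t i)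
    (hsc : ∀ i, s i ≤ c) (htc : ∀ i, t i ≤ c) (hst : ∀ i, s i + t i ≤ 1)
    (F : Finset ι) :
    (∏ i ∈ F, s i) ≤ c ^ F.card ∧ (∏ i ∈ F, t i) ≤ c ^ F.card ∧
      (∏ i ∈ F, s i) + (∏ i ∈ F, t i) ≤ c ^ F.card + (1 - c) ^ F.card := by
  induction F using Finset.induction with
  | empty => simp
  | @insert a F ha ih =>
    obtain ⟨ihS, ihT, ihST⟩ := ih
    rw [Finset.prod_insert ha, Finset.prod_insert ha, Finset.card_insert_of_notMem ha]
    set S := ∏ i ∈ F, s i with hS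
    set T := ∏ i ∈ F, t i with hT
    have hS0 : 0 ≤ S := Finset.prod_nonneg fun i _ => hs0 i
    have hT0 : 0 ≤ T := Finset.prod_nonneg fun i _ => ht0 i
    set n := F.card with hn
    have hd0 : (0:ℝ) ≤ 1 - c := by linarith
    have hdn : (1-c)^n ≤ c^n := pow_le_pow_left₀ hd0 (by linarith) n
    have hdn0 : (0:ℝ) ≤ (1-c)^n := pow_nonneg hd0 n
    have hcn0 : (0:ℝ) ≤ c^n := pow_nonneg (by linarith) n
    refine ⟨?_, ?_, ?_⟩
    · rw [pow_succ']
      exact mul_le_mul (hsc a) ihS hS0 (by linarith)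
    · rw [pow_succ']
      exact mul_le_mul (htc a) ihT hT0 (by linarith)
    · have h1 : c^(n+1) + (1-c)^(n+1) = c * c^n + (1-c) * (1-c)^n := by ring
      rw [h1]
      rcases le_total S T with hle | hle
      · nlinarith [hs0 a, ht0 a, hsc a, htc a, hst a, mul_le_mul_of_nonneg_left hle hd0]
      · nlinarith [hs0 a, ht0 a, hsc a, htc a, hst a, mul_le_mul_of_nonneg_left hle hd0]

lemma hulc_exp_aux (x : ℝ) (hx : 0 ≤ x) (n : ℕ) :
    (1+x)^n ≤ 1 + n*x + (n*x)^2/2 * Real.exp (n*x) := by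
  induction n with
  | zero => simp
  | succ n ih =>
    have hex : Real.exp ((n:ℝ)*x) * Real.exp x = Real.exp ((n+1:ℕ)*x) := by
      rw [← Real.exp_add]; push_cast; ring_nf
    have h1x : (1:ℝ) + x ≤ Real.exp x := by linarith [Real.add_one_le_exp x]
    have he1 : (1:ℝ) ≤ Real.exp ((n:ℝ)*x) := Real.one_le_exp (by positivity)
    have hgoal : ((1:ℝ)+x)^(n+1) = (1+x)^n * (1+x) := by ring
    rw [hgoal]
    have step : (1+x)^n * (1+x) ≤ (1 + n*x + (n*x)^2/2 * Real.exp (n*x)) * (1+x) :=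
      mul_le_mul_of_nonneg_right ih (by linarith)
    refine step.trans ?_
    push_cast
    have hee : Real.exp ((n:ℝ)*x) * (1+x) ≤ Real.exp (((n:ℝ)+1)*x) := by
      have := mul_le_mul_of_nonneg_left h1x (Real.exp_nonneg ((n:ℝ)*x))
      calc Real.exp ((n:ℝ)*x) * (1+x) ≤ Real.exp ((n:ℝ)*x) * Real.exp x := this
        _ = Real.exp (((n:ℝ)+1)*x) := by rw [← Real.exp_add]; ring_nf
    have he1' : (1:ℝ) ≤ Real.exp (((n:ℝ)+1)*x) := Real.one_le_exp (by positivity)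
    nlinarith [sq_nonneg ((n:ℝ)*x), mul_nonneg (mul_nonneg (Nat.cast_nonneg n : (0:ℝ) ≤ n) hx) hx,
      mul_le_mul_of_nonneg_left hee (by positivity : (0:ℝ) ≤ ((n:ℝ)*x)^2/2),
      sq_nonneg ((n:ℝ)*x*x)]

lemma hulc_negexp_aux (x : ℝ) (hx : 0 ≤ x) (hx1 : x ≤ 1) (n : ℕ) :
    (1-x)^n ≤ 1 - n*x + (n:ℝ)^2 * x^2 / 2 := by
  induction n with
  | zero => simp
  | succ n ih =>
    have h0 : (0:ℝ) ≤ 1 - x := by linarith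
    have hgoal : ((1:ℝ)-x)^(n+1) = (1-x)^n * (1-x) := by ring
    rw [hgoal]
    have step : (1-x)^n * (1-x) ≤ (1 - n*x + (n:ℝ)^2*x^2/2) * (1-x) :=
      mul_le_mul_of_nonneg_right ih h0
    refine step.trans ?_
    push_cast
    nlinarith [sq_nonneg ((n:ℝ)*x), mul_nonneg (mul_nonneg (mul_nonneg (Nat.cast_nonneg n : (0:ℝ) ≤ n) (Nat.cast_nonneg n : (0:ℝ) ≤ n)) hx) (mul_nonneg hx hx), sq_nonneg x]

lemma hulc_g_bound (x : ℝ) (hx : 0 ≤ x) (hx1 : x ≤ 1) (n : ℕ) :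
    (1+x)^n + (1-x)^n ≤ 2 + ((n:ℝ)*x)^2 * Real.exp ((n:ℝ)*x) := by
  have h1 := hulc_exp_aux x hx n
  have h2 := hulc_negexp_aux x hx hx1 n
  have he1 : (1:ℝ) ≤ Real.exp ((n:ℝ)*x) := Real.one_le_exp (by positivity)
  nlinarith [sq_nonneg ((n:ℝ)*x)]

lemma hulc_g_mono (x : ℝ) (hx : 0 ≤ x) (hx1 : x ≤ 1) :
    Monotone (fun n : ℕ => (1+x)^n + (1-x)^n) := by
  apply monotone_nat_of_le_succ
  intro n
  have h : (1-x)^n ≤ (1+x)^n := pow_le_pow_left₀ (by linarith) (by linarith) n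
  have h0 : (0:ℝ) ≤ (1-x)^n := pow_nonneg (by linarith) n
  simp only [pow_succ]
  nlinarith


lemma hulc_side_bound {Ω : Type*} [MeasurableSpace Ω] (P : Measure Ω) [IsProbabilityMeasure P]
    (θ₀ Δ : ℝ) (hΔ0 : 0 ≤ Δ) (hΔhalf : Δ ≤ 1/2) (b : ℕ) (f : Fin b → Ω → ℝ)
    (hmeas : ∀ j, Measurable (f j)) (hindep : iIndepFun f P)
    (hbias : ∀ j, medBias P (f j) θ₀ ≤ Δ) :
    (P ((⋂ j, {ω | f j ω < θ₀}) ∪ ⋂ j, {ω | θ₀ < f j ω})).toReal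
      ≤ (1/2+Δ)^b + (1/2-Δ)^b := by
  have hmA : ∀ j, MeasurableSet {ω | f j ω < θ₀} := fun j => measurableSet_lt (hmeas j) measurable_const
  have hmC : ∀ j, MeasurableSet {ω | θ₀ < f j ω} := fun j => measurableSet_lt measurable_const (hmeas j)
  have hmLe : ∀ j, MeasurableSet {ω | f j ω ≤ θ₀} := fun j => measurableSet_le (hmeas j) measurable_const
  have hmGe : ∀ j, MeasurableSet {ω | θ₀ ≤ f j ω} := fun j => measurableSet_le measurable_const (hmeas j)
  set s : Fin b → ℝ := fun j => (P {ω | f j ω < θ₀}).toReal with hs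
  set t : Fin b → ℝ := fun j => (P {ω | θ₀ < f j ω}).toReal with ht
  -- pointwise facts
  have hu : ∀ j, 1/2 - Δ ≤ (P {ω | f j ω ≤ θ₀}).toReal ∧ 1/2 - Δ ≤ (P {ω | θ₀ ≤ f j ω}).toReal := by
    intro j
    have hb := hbias j
    unfold medBias at hb
    have h1 : 1/2 - min (P {ω | f j ω ≤ θ₀}).toReal (P {ω | θ₀ ≤ f j ω}).toReal ≤ Δ :=
      le_trans (le_max_left _ _) hb
    constructor <;> [skip; skip] <;>
      · have := min_le_left (P {ω | f j ω ≤ θ₀}).toReal (P {ω | θ₀ ≤ f j ω}).toReal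
        have := min_le_right (P {ω | f j ω ≤ θ₀}).toReal (P {ω | θ₀ ≤ f j ω}).toReal
        linarith
  have hcomplGe : ∀ j, (P {ω | f j ω < θ₀}).toReal + (P {ω | θ₀ ≤ f j ω}).toReal = 1 := by
    intro j
    have hset : {ω | f j ω < θ₀} = {ω | θ₀ ≤ f j ω}ᶜ := by
      ext ω; simp [not_le]
    rw [hset, prob_compl_eq_one_sub (hmGe j)]
    rw [ENNReal.toReal_sub_of_le prob_le_one ENNReal.one_ne_top]
    simp
  have hcomplLe : ∀ j, (P {ω | θ₀ < f j ω}).toReal + (P {ω | f j ω ≤ θ₀}).toReal = 1 := by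
    intro j
    have hset : {ω | θ₀ < f j ω} = {ω | f j ω ≤ θ₀}ᶜ := by
      ext ω; simp [not_le]
    rw [hset, prob_compl_eq_one_sub (hmLe j)]
    rw [ENNReal.toReal_sub_of_le prob_le_one ENNReal.one_ne_top]
    simp
  have hsc : ∀ j, s j ≤ 1/2 + Δ := by
    intro j; have := (hu j).2; have := hcomplGe j; simp only [hs]; linarith
  have htc : ∀ j, t j ≤ 1/2 + Δ := by
    intro j; have := (hu j).1; have := hcomplLe j; simp only [ht]; linarith
  have hstle : ∀ j, s j + t j ≤ 1 := by
    intro j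
    have hsub : (P {ω | f j ω < θ₀}).toReal ≤ (P {ω | f j ω ≤ θ₀}).toReal :=
      ENNReal.toReal_mono (measure_ne_top _ _) (measure_mono (fun ω (h : f j ω < θ₀) => (le_of_lt h : f j ω ≤ θ₀)))
    have := hcomplLe j
    simp only [hs, ht]; linarith
  -- independence products
  have hPA : P (⋂ j, {ω | f j ω < θ₀}) = ∏ j, P {ω | f j ω < θ₀} := by
    refine hindep.meas_iInter fun i => ⟨Set.Iio θ₀, measurableSet_Iio, rfl⟩
  have hPC : P (⋂ j, {ω | θ₀ < f j ω}) = ∏ j, P {ω | θ₀ < f j ω} := by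
    refine hindep.meas_iInter fun i => ⟨Set.Ioi θ₀, measurableSet_Ioi, rfl⟩
  have hbound := hulc_prod_aux (1/2+Δ) (by linarith) (by linarith) s t
    (fun j => ENNReal.toReal_nonneg) (fun j => ENNReal.toReal_nonneg) hsc htc hstle Finset.univ
  have hcard : (Finset.univ : Finset (Fin b)).card = b := by simp
  rw [hcard] at hbound
  have h12 : (1:ℝ) - (1/2+Δ) = 1/2 - Δ := by ring
  calc (P ((⋂ j, {ω | f j ω < θ₀}) ∪ ⋂ j, {ω | θ₀ < f j ω})).toReal
      ≤ (P (⋂ j, {ω | f j ω < θ₀}) + P (⋂ j, {ω | θ₀ < f j ω})).toReal := by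
        apply ENNReal.toReal_mono
        · exact ENNReal.add_ne_top.mpr ⟨measure_ne_top _ _, measure_ne_top _ _⟩
        · exact measure_union_le _ _
    _ = (∏ j, s j) + ∏ j, t j := by
        rw [ENNReal.toReal_add (measure_ne_top _ _) (measure_ne_top _ _), hPA, hPC,
          ENNReal.toReal_prod, ENNReal.toReal_prod]
    _ ≤ (1/2+Δ)^b + (1-(1/2+Δ))^b := hbound.2.2
    _ = (1/2+Δ)^b + (1/2-Δ)^b := by rw [h12]


set_option maxHeartbeats 1000000 in
/-- finite-sample validity of HulC, Theorem 1 of the paper.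
With `B = ⌈log₂(2/α)⌉`, `B' = ⌊log₂(2/α)⌋`, a randomized bucket count `B*` with
`P(B* = B) = 2 − 2^{B−1}α`, and for each `b ∈ {B', B}` estimators `θ̂^{(b,1)}, …, θ̂^{(b,b)}`
that are mutually independent, independent of `B*`, and with median bias about `θ₀`
at most `Δ`, the HulC interval misses `θ₀` with probability at most
`α(1 + 2(BΔ)² e^{2BΔ})`. -/
theorem hulc_coverage {Ω : Type*} [MeasurableSpace Ω]
    (P : Measure Ω) [IsProbabilityMeasure P]
    (α : ℝ) (hα0 : 0 < α) (hα1 : α ≤ 1)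
    (B B' : ℕ) (hB : B = ⌈Real.logb 2 (2 / α)⌉₊) (hB' : B' = ⌊Real.logb 2 (2 / α)⌋₊)
    (Bstar : Ω → ℕ) (hBstarMeas : Measurable Bstar)
    (hBstarVals : ∀ ω, Bstar ω = B' ∨ Bstar ω = B)
    (hBstarLaw : P {ω | Bstar ω = B} = ENNReal.ofReal (2 - 2 ^ (B - 1) * α))
    (θ₀ Δ : ℝ) (hΔ0 : 0 ≤ Δ) (hΔhalf : Δ ≤ 1 / 2)
    (θh : (b : ℕ) → Fin b → Ω → ℝ)
    (hmeas : ∀ b (j : Fin b), Measurable (θh b j))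
    (hindep : ∀ b : ℕ, b = B' ∨ b = B → iIndepFun (θh b) P)
    (hindepBstar : ∀ b : ℕ, b = B' ∨ b = B →
      IndepFun (fun ω => fun j : Fin b => θh b j ω) Bstar P)
    (hbias : ∀ b : ℕ, b = B' ∨ b = B → ∀ j : Fin b, medBias P (θh b j) θ₀ ≤ Δ) :
    P {ω | θ₀ ∉ Set.Icc (⨅ j : Fin (Bstar ω), θh (Bstar ω) j ω)
          (⨆ j : Fin (Bstar ω), θh (Bstar ω) j ω)} ≤
      ENNReal.ofReal (α * (1 + 2 * ((B : ℝ) * Δ) ^ 2 * Real.exp (2 * (B : ℝ) * Δ))) := by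
  
  -- arithmetic about B, B', q
  set x := Real.logb 2 (2 / α) with hxdef
  have h2αpos : (0:ℝ) < 2 / α := by positivity
  have h2α : (2:ℝ) ≤ 2 / α := by rw [le_div_iff₀ hα0]; nlinarith
  have hx1 : (1:ℝ) ≤ x := by
    rw [hxdef, Real.le_logb_iff_rpow_le one_lt_two h2αpos]
    simpa using h2α
  have hB1 : 1 ≤ B := by rw [hB]; exact Nat.one_le_ceil_iff.mpr (by linarith)
  have hxB : x ≤ (B:ℝ) := hB ▸ Nat.le_ceil x
  have hrw : (2:ℝ) ^ x = 2 / α := Real.rpow_logb two_pos (by norm_num) h2αpos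
  have hBx : ((B:ℝ) - 1) < x := by
    have h1 : (B - 1 : ℕ) < ⌈x⌉₊ := by omega
    have h2 : ((B - 1 : ℕ) : ℝ) < x := Nat.lt_ceil.mp (hB ▸ h1)
    rwa [Nat.cast_sub hB1, Nat.cast_one] at h2
  have h2B : 2 / α ≤ (2:ℝ) ^ B := by
    calc 2 / α = (2:ℝ) ^ x := hrw.symm
      _ ≤ (2:ℝ) ^ (B:ℝ) := Real.rpow_le_rpow_of_exponent_le one_le_two hxB
      _ = (2:ℝ) ^ B := Real.rpow_natCast 2 B
  have h2B' : (2:ℝ) ^ (B - 1 : ℕ) < 2 / α := by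
    calc (2:ℝ) ^ (B - 1 : ℕ) = (2:ℝ) ^ (((B - 1 : ℕ)):ℝ) := (Real.rpow_natCast 2 _).symm
      _ = (2:ℝ) ^ ((B:ℝ) - 1) := by rw [Nat.cast_sub hB1, Nat.cast_one]
      _ < (2:ℝ) ^ x := Real.rpow_lt_rpow_of_exponent_lt one_lt_two hBx
      _ = 2 / α := hrw
  set q : ℝ := 2 - 2 ^ (B - 1) * α with hqdef
  have hq0 : 0 < q := by
    have hh : (2:ℝ) ^ (B - 1 : ℕ) * α < 2 := (lt_div_iff₀ hα0).mp h2B'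
    simp only [hqdef]; linarith
  have hpowB : (2:ℝ) ^ B = 2 ^ (B - 1 : ℕ) * 2 := by
    rw [← pow_succ]; congr 1; omega
  have hq1 : q ≤ 1 := by
    have h2' : 2 ≤ α * 2 ^ B := (div_le_iff₀' hα0).mp h2B
    rw [hpowB] at h2'
    simp only [hqdef]; nlinarith
  have hBB' : B' = B ∨ B' + 1 = B := by
    have h1 : B' ≤ B := by rw [hB, hB']; exact Nat.floor_le_ceil x
    have h2 : B ≤ B' + 1 := by rw [hB, hB']; exact Nat.ceil_le_floor_add_one x
    omega
  -- key identity
  have hkey : q * (1/2:ℝ)^B + (1-q) * (1/2:ℝ)^B' = α / 2 := by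
    rcases hBB' with h | h
    · -- B' = B, so x = B exactly
      have hBlex : (B:ℝ) ≤ x := by
        have : (B':ℝ) ≤ x := by
          rw [hB']; exact Nat.floor_le (by linarith)
        rwa [h] at this
      have hxeq : x = (B:ℝ) := le_antisymm hxB hBlex
      have h2Beq : (2:ℝ) ^ B = 2 / α := by
        rw [← Real.rpow_natCast 2 B, ← hxeq, hrw]
      have hne : ((2:ℝ) ^ B) ≠ 0 := by positivity
      have hhalf : (1/2:ℝ)^B = ((2:ℝ)^B)⁻¹ := by
        rw [one_div, inv_pow]
      rw [h, hhalf, h2Beq]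
      field_simp
      ring
    · -- B' + 1 = B
      have hB1' : B - 1 = B' := by omega
      have hhalf : (1/2:ℝ)^B' * (2:ℝ)^B' = 1 := by
        rw [← mul_pow]; norm_num
      have hBpow : (1/2:ℝ)^B = (1/2:ℝ)^B' * (1/2) := by
        rw [← pow_succ, h]
      rw [hBpow]
      simp only [hqdef, hB1']
      nlinarith [hhalf]
  -- events
  set U : ℕ → Set Ω := fun b =>
    {ω | (∀ j : Fin b, θh b j ω < θ₀) ∨ (∀ j : Fin b, θ₀ < θh b j ω)} with hU
  set E : Set Ω := {ω | θ₀ ∉ Set.Icc (⨅ j : Fin (Bstar ω), θh (Bstar ω) j ω)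
          (⨆ j : Fin (Bstar ω), θh (Bstar ω) j ω)} with hE
  have hsplit : ∀ ω, ω ∈ E → ∀ b, Bstar ω = b → ω ∈ U b := by
    intro ω hωE b hb
    simp only [hE, Set.mem_setOf_eq] at hωE
    rw [hb] at hωE
    rw [Set.mem_Icc, not_and_or, not_le, not_le] at hωE
    simp only [hU, Set.mem_setOf_eq]
    rcases hωE with h | h
    · right
      intro j
      exact h.trans_le (ciInf_le (Finite.bddBelow_range _) j)
    · left
      intro j
      exact (le_ciSup (Finite.bddAbove_range _) j).trans_lt h
  have hEsub : E ⊆ (U B ∩ Bstar ⁻¹' {B}) ∪ (U B' ∩ Bstar ⁻¹' ({B}ᶜ)) := by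
    intro ω hωE
    by_cases hω : Bstar ω = B
    · exact Or.inl ⟨hsplit ω hωE B hω, hω⟩
    · have hB'ω : Bstar ω = B' := (hBstarVals ω).resolve_right hω
      exact Or.inr ⟨hsplit ω hωE B' hB'ω, hω⟩
  -- factorization
  have hUmeas : ∀ b, MeasurableSet
      {v : Fin b → ℝ | (∀ j, v j < θ₀) ∨ (∀ j, θ₀ < v j)} := by
    intro b
    have h1 : {v : Fin b → ℝ | ∀ j, v j < θ₀} = ⋂ j, (fun v : Fin b → ℝ => v j) ⁻¹' Set.Iio θ₀ := by
      ext v; simp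
    have h2 : {v : Fin b → ℝ | ∀ j, θ₀ < v j} = ⋂ j, (fun v : Fin b → ℝ => v j) ⁻¹' Set.Ioi θ₀ := by
      ext v; simp
    have : {v : Fin b → ℝ | (∀ j, v j < θ₀) ∨ (∀ j, θ₀ < v j)}
        = {v : Fin b → ℝ | ∀ j, v j < θ₀} ∪ {v : Fin b → ℝ | ∀ j, θ₀ < v j} := by
      ext v; simp [Set.mem_union]
    rw [this, h1, h2]
    exact (MeasurableSet.iInter fun j => measurable_pi_apply j measurableSet_Iio).union
      (MeasurableSet.iInter fun j => measurable_pi_apply j measurableSet_Ioi)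
  have hfact : ∀ b, b = B' ∨ b = B → ∀ S : Set ℕ, MeasurableSet S →
      P (U b ∩ Bstar ⁻¹' S) = P (U b) * P (Bstar ⁻¹' S) := by
    intro b hb S hS
    have h := (hindepBstar b hb).measure_inter_preimage_eq_mul
      {v : Fin b → ℝ | (∀ j, v j < θ₀) ∨ (∀ j, θ₀ < v j)} S (hUmeas b) hS
    exact h
  have hPB : P (Bstar ⁻¹' {B}) = ENNReal.ofReal q := by
    have : Bstar ⁻¹' {B} = {ω | Bstar ω = B} := by ext ω; simp
    rw [this, hBstarLaw]
  have hPBc : P (Bstar ⁻¹' ({B}ᶜ)) = 1 - ENNReal.ofReal q := by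
    rw [Set.preimage_compl, prob_compl_eq_one_sub (hBstarMeas (measurableSet_singleton B)), hPB]
  -- the bound on P E in ENNReal
  set X : ENNReal := P (U B) * ENNReal.ofReal q + P (U B') * (1 - ENNReal.ofReal q) with hX
  have hPEX : P E ≤ X := by
    calc P E ≤ P ((U B ∩ Bstar ⁻¹' {B}) ∪ (U B' ∩ Bstar ⁻¹' ({B}ᶜ))) := measure_mono hEsub
      _ ≤ P (U B ∩ Bstar ⁻¹' {B}) + P (U B' ∩ Bstar ⁻¹' ({B}ᶜ)) := measure_union_le _ _
      _ = X := by
          rw [hfact B (Or.inr rfl) {B} (measurableSet_singleton B),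
            hfact B' (Or.inl rfl) ({B}ᶜ) (measurableSet_singleton B).compl, hPB, hPBc]
  have hsub1 : (1 - ENNReal.ofReal q) ≠ ⊤ :=
    ne_top_of_le_ne_top ENNReal.one_ne_top tsub_le_self
  have hXne : X ≠ ⊤ := by
    simp only [hX]
    exact ENNReal.add_ne_top.mpr
      ⟨ENNReal.mul_ne_top (measure_ne_top _ _) ENNReal.ofReal_ne_top,
       ENNReal.mul_ne_top (measure_ne_top _ _) hsub1⟩
  have htgt0 : 0 ≤ α * (1 + 2 * ((B : ℝ) * Δ) ^ 2 * Real.exp (2 * (B : ℝ) * Δ)) := by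
    positivity
  refine hPEX.trans ((ENNReal.le_ofReal_iff_toReal_le hXne htgt0).mpr ?_)
  -- real computation
  have hq' : (ENNReal.ofReal q).toReal = q := ENNReal.toReal_ofReal hq0.le
  have hq'' : (1 - ENNReal.ofReal q).toReal = 1 - q := by
    rw [ENNReal.toReal_sub_of_le (ENNReal.ofReal_le_one.mpr hq1) ENNReal.one_ne_top,
      ENNReal.toReal_one, hq']
  have hXtr : X.toReal = (P (U B)).toReal * q + (P (U B')).toReal * (1 - q) := by
    rw [hX, ENNReal.toReal_add (ENNReal.mul_ne_top (measure_ne_top _ _) ENNReal.ofReal_ne_top)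
      (ENNReal.mul_ne_top (measure_ne_top _ _) hsub1), ENNReal.toReal_mul, ENNReal.toReal_mul,
      hq', hq'']
  -- bounds on P (U b)
  have hUb : ∀ b, b = B' ∨ b = B → (P (U b)).toReal ≤ (1/2+Δ)^b + (1/2-Δ)^b := by
    intro b hb
    have heq : U b = (⋂ j : Fin b, {ω | θh b j ω < θ₀}) ∪ ⋂ j : Fin b, {ω | θ₀ < θh b j ω} := by
      ext ω; simp [hU, Set.mem_iInter]
    rw [heq]
    exact hulc_side_bound P θ₀ Δ hΔ0 hΔhalf b (θh b) (hmeas b) (hindep b hb) (hbias b hb)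
  have huB := hUb B (Or.inr rfl)
  have huB' := hUb B' (Or.inl rfl)
  -- real chain
  set g : ℕ → ℝ := fun n => (1+2*Δ)^n + (1-2*Δ)^n with hg
  have hMg : ∀ n : ℕ, (1/2+Δ)^n + (1/2-Δ)^n = (1/2:ℝ)^n * g n := by
    intro n
    have e1 : (1/2+Δ:ℝ) = (1/2) * (1+2*Δ) := by ring
    have e2 : (1/2-Δ:ℝ) = (1/2) * (1-2*Δ) := by ring
    rw [hg]; rw [e1, e2, mul_pow, mul_pow]; ring
  have h2Δ0 : (0:ℝ) ≤ 2*Δ := by linarith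
  have h2Δ1 : (2:ℝ)*Δ ≤ 1 := by linarith
  have hgmono : g B' ≤ g B := hulc_g_mono (2*Δ) h2Δ0 h2Δ1 (by rcases hBB' with h|h <;> omega)
  have hgB0 : 0 ≤ g B := by
    simp only [hg]
    have h1 : (0:ℝ) ≤ (1+2*Δ)^B := by positivity
    have h2 : (0:ℝ) ≤ (1-2*Δ)^B := pow_nonneg (by linarith) B
    linarith
  have hgbound : g B ≤ 2 + ((B:ℝ)*(2*Δ))^2 * Real.exp ((B:ℝ)*(2*Δ)) :=
    hulc_g_bound (2*Δ) h2Δ0 h2Δ1 B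
  have hPU0 : (0:ℝ) ≤ (P (U B)).toReal := ENNReal.toReal_nonneg
  have hPU0' : (0:ℝ) ≤ (P (U B')).toReal := ENNReal.toReal_nonneg
  have hhalfpos : ∀ n : ℕ, (0:ℝ) < (1/2:ℝ)^n := fun n => by positivity
  have huB2 : (P (U B)).toReal ≤ (1/2:ℝ)^B * g B := by rw [← hMg B]; exact huB
  have huB'2 : (P (U B')).toReal ≤ (1/2:ℝ)^B' * g B' := by rw [← hMg B']; exact huB'
  have step1 : (P (U B)).toReal * q + (P (U B')).toReal * (1 - q)
      ≤ ((1/2:ℝ)^B * g B) * q + ((1/2:ℝ)^B' * g B') * (1 - q) := by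
    have h1 := mul_le_mul_of_nonneg_right huB2 hq0.le
    have h2 := mul_le_mul_of_nonneg_right huB'2 (by linarith : (0:ℝ) ≤ 1 - q)
    linarith
  have step2 : ((1/2:ℝ)^B * g B) * q + ((1/2:ℝ)^B' * g B') * (1 - q)
      ≤ ((1/2:ℝ)^B * g B) * q + ((1/2:ℝ)^B' * g B) * (1 - q) := by
    have h := mul_le_mul_of_nonneg_right
      (mul_le_mul_of_nonneg_left hgmono (hhalfpos B').le) (by linarith : (0:ℝ) ≤ 1 - q)
    linarith
  have step3 : ((1/2:ℝ)^B * g B) * q + ((1/2:ℝ)^B' * g B) * (1 - q)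
      = (q * (1/2:ℝ)^B + (1-q) * (1/2:ℝ)^B') * g B := by ring
  have step4 : (q * (1/2:ℝ)^B + (1-q) * (1/2:ℝ)^B') * g B = (α/2) * g B := by rw [hkey]
  have step5 : (α/2) * g B ≤ (α/2) * (2 + ((B:ℝ)*(2*Δ))^2 * Real.exp ((B:ℝ)*(2*Δ))) :=
    mul_le_mul_of_nonneg_left hgbound (by linarith)
  have hexparg : (B:ℝ)*(2*Δ) = 2 * (B:ℝ) * Δ := by ring
  have step6 : (α/2) * (2 + ((B:ℝ)*(2*Δ))^2 * Real.exp ((B:ℝ)*(2*Δ)))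
      = α * (1 + 2 * ((B : ℝ) * Δ) ^ 2 * Real.exp (2 * (B : ℝ) * Δ)) := by
    rw [hexparg]; ring
  have step34 : ((1/2:ℝ)^B * g B) * q + ((1/2:ℝ)^B' * g B) * (1 - q) = (α/2) * g B := by
    rw [step3, step4]
  have step56 : (α/2) * g B ≤ α * (1 + 2 * ((B : ℝ) * Δ) ^ 2 * Real.exp (2 * (B : ℝ) * Δ)) :=
    step5.trans_eq step6
  rw [hXtr]
  exact ((step1.trans step2).trans_eq step34).trans step56
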